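/- Let n ≥ 1, ε ∈ (0,1), and let K ⊂ ℝⁿ be a set with 0 ∈ K such that K ⊂ ⋃_{i=1}^N (x_i + B₂ⁿ) for some points x₁,…,x_N ∈ ℝⁿ. Suppose θ ∈ S^{n−1} satisfies |⟨x_i/|x_i|, θ⟩| ≤ ε for every i with x_i ≠ 0. Then every t ≥ 0 with tθ ∈ K satisfies t ≤ 1/√(1−ε²); in particular, if K is a convex body with 0 in its interior, then ρ_K(θ) ≤ 1/√(1−ε²). -/
import Mathlib


open Metric Set MeasureTheory
open scoped RealInnerProductSpace ENNReal Pointwise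

abbrev Euc (n : ℕ) := EuclideanSpace ℝ (Fin n)

/-- The covering number `N(K, T)`: the minimal number of translates of `T`
needed to cover `K`. -/
noncomputable def coveringNumber {n : ℕ} (K T : Set (Euc n)) : ℕ :=
  sInf {N : ℕ | ∃ x : Fin N → Euc n, K ⊆ ⋃ i, x i +ᵥ T}

/-- The radial function `ρ_K(θ) = sup {t ≥ 0 : tθ ∈ K}`. -/
noncomputable def radialFn {n : ℕ} (K : Set (Euc n)) (θ : Euc n) : ℝ :=
  sSup {t : ℝ | 0 ≤ t ∧ t • θ ∈ K}

/-- The support function `h_K(u) = sup {⟨x, u⟩ : x ∈ K}`. -/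
noncomputable def suppFn {n : ℕ} (K : Set (Euc n)) (u : Euc n) : ℝ :=
  sSup ((fun x => ⟪x, u⟫) '' K)

/-- `F` is a facet of `P ⊆ ℝⁿ`: a nonempty exposed face of dimension `n - 1`. -/
def IsFacet {n : ℕ} (P F : Set (Euc n)) : Prop :=
  F.Nonempty ∧ IsExposed ℝ P F ∧ Module.finrank ℝ (vectorSpan ℝ F) = n - 1


/-- Let `K ⊆ ℝⁿ` with `0 ∈ K` be covered by unit balls centered at `x₁, …, x_N`, let
`ε ∈ (0,1)`, and let `θ ∈ S^{n−1}` be `ε`-orthogonal to every normalized center.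
Then every `t ≥ 0` with `tθ ∈ K` satisfies `t ≤ 1/√(1−ε²)`; in particular, if `K` is a
convex body with `0` in its interior, then `ρ_K(θ) ≤ 1/√(1−ε²)`. -/
theorem radial_bound_on_A_eps {n : ℕ} (hn : 1 ≤ n) (ε : ℝ) (hε : ε ∈ Set.Ioo (0 : ℝ) 1)
    (K : Set (Euc n)) (h0K : (0 : Euc n) ∈ K)
    (N : ℕ) (x : Fin N → Euc n)
    (hcover : K ⊆ ⋃ i, x i +ᵥ closedBall (0 : Euc n) 1)
    (θ : Euc n) (hθ : θ ∈ sphere (0 : Euc n) 1)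
    (hortho : ∀ i, x i ≠ 0 → |⟪‖x i‖⁻¹ • x i, θ⟫| ≤ ε) :
    (∀ t : ℝ, 0 ≤ t → t • θ ∈ K → t ≤ 1 / Real.sqrt (1 - ε ^ 2)) ∧
      (IsCompact K → Convex ℝ K → 0 ∈ interior K →
        radialFn K θ ≤ 1 / Real.sqrt (1 - ε ^ 2)) := by

  have hε2 : (0:ℝ) < 1 - ε ^ 2 := by nlinarith [hε.1, hε.2]
  set s := Real.sqrt (1 - ε ^ 2) with hs
  have hs0 : 0 < s := Real.sqrt_pos.mpr hε2
  have hs2 : s ^ 2 = 1 - ε ^ 2 := Real.sq_sqrt hε2.le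
  have hθn : ‖θ‖ = 1 := by simpa using hθ
  have main : ∀ t : ℝ, 0 ≤ t → t • θ ∈ K → t ≤ 1 / s := by
    intro t ht htK
    obtain ⟨i, hi⟩ := Set.mem_iUnion.mp (hcover htK)
    obtain ⟨y, hy, hxy⟩ := hi
    have hyb : ‖y‖ ≤ 1 := by simpa using hy
    have hty : t • θ - x i = y := by
      simp only [vadd_eq_add] at hxy
      rw [← hxy]; abel
    have hnb : ‖t • θ - x i‖ ≤ 1 := by rw [hty]; exact hyb
    have hsq : ‖t • θ - x i‖ ^ 2 ≤ 1 := by nlinarith [norm_nonneg (t • θ - x i)]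
    have hexp : ‖t • θ - x i‖ ^ 2 = t ^ 2 - 2 * (t * ⟪θ, x i⟫) + ‖x i‖ ^ 2 := by
      rw [norm_sub_sq_real, norm_smul, real_inner_smul_left]
      simp [hθn, abs_of_nonneg ht, mul_pow]
    rw [hexp] at hsq
    -- bound on inner product
    have hip : ⟪θ, x i⟫ ≤ ε * ‖x i‖ := by
      by_cases hxi : x i = 0
      · simp [hxi]
      · have := hortho i hxi
        rw [real_inner_smul_left] at this
        have hxn : 0 < ‖x i‖ := norm_pos_iff.mpr hxi
        have h1 : |⟪x i, θ⟫| ≤ ε * ‖x i‖ := by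
          rw [abs_mul, abs_inv, abs_norm] at this
          calc |⟪x i, θ⟫| = ‖x i‖ * (‖x i‖⁻¹ * |⟪x i, θ⟫|) := by
                field_simp
            _ ≤ ‖x i‖ * ε := by
                exact mul_le_mul_of_nonneg_left this hxn.le
            _ = ε * ‖x i‖ := mul_comm _ _
        calc ⟪θ, x i⟫ = ⟪x i, θ⟫ := real_inner_comm _ _
          _ ≤ |⟪x i, θ⟫| := le_abs_self _
          _ ≤ ε * ‖x i‖ := h1
    -- so (1-ε²) t² ≤ 1
    have key : (1 - ε ^ 2) * t ^ 2 ≤ 1 := by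
      nlinarith [sq_nonneg (ε * t - ‖x i‖), mul_le_mul_of_nonneg_left hip ht]
    rw [le_div_iff₀ hs0]
    nlinarith [mul_nonneg ht hs0.le, hs2, key, hs0]
  refine ⟨main, fun _ _ _ => ?_⟩
  apply Real.sSup_le
  · intro t ht
    exact main t ht.1 ht.2
  · positivity
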